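/- Let T be a measure-preserving G-action and H ⊆ G a closed subgroup. Then γ = ν + H^⊥ ∈ Ĥ = Ĝ/H^⊥ is an eigenvalue of the restriction T|_H with a non-constant eigenfunction if and only if the reduced spectral measure σ₀^T of T gives positive mass to the coset ν + H^⊥ ⊆ Ĝ. -/

import Mathlib

open MeasureTheory
open scoped ComplexConjugate

/-- Equip the Pontryagin dual with its Borel σ-algebra. -/
noncomputable instance pontryaginDualMeasurableSpace
    (A : Type*) [Monoid A] [TopologicalSpace A] :
    MeasurableSpace (PontryaginDual A) := borel _

instance pontryaginDualBorelSpace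
    (A : Type*) [Monoid A] [TopologicalSpace A] :
    BorelSpace (PontryaginDual A) := ⟨rfl⟩

lemma continuous_evalPD {A : Type*} [Monoid A] [TopologicalSpace A] (a : A) :
    Continuous fun γ : PontryaginDual A => (γ a : ℂ) :=
  continuous_subtype_val.comp
    (continuous_eval_const (F := ContinuousMonoidHom A Circle) a)

lemma auxA {α : Type*} [MeasurableSpace α] (ρ : Measure α) [IsFiniteMeasure ρ] (u : α → ℂ)
    (hm : AEStronglyMeasurable u ρ) (hn : ∀ x, ‖u x‖ = 1)
    (hi : ∫ x, u x ∂ρ = ((ρ Set.univ).toReal : ℂ)) : ∀ᵐ x ∂ρ, u x = 1 := by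
  have hub : Integrable u ρ := by
    refine (integrable_const (1 : ℝ)).mono' hm (Filter.Eventually.of_forall fun x => ?_)
    simp [hn x]
  have hure : Integrable (fun x => (u x).re) ρ := by simpa using hub.re
  have h2 : ∫ x, (u x).re ∂ρ = (ρ Set.univ).toReal := by
    have h := integral_re hub
    rw [hi] at h
    simpa using h
  have h0 : ∫ x, (1 - (u x).re) ∂ρ = 0 := by
    rw [integral_sub (integrable_const 1) hure, integral_const, smul_eq_mul, mul_one, h2,
      measureReal_def, sub_self]
  have hnn : 0 ≤ fun x => (1 - (u x).re) := by
    intro x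
    have := Complex.re_le_norm (u x)
    rw [hn x] at this
    simpa using this
  have hzero : (fun x => (1 - (u x).re)) =ᵐ[ρ] 0 := by
    rw [← integral_eq_zero_iff_of_nonneg hnn ((integrable_const 1).sub hure)]
    exact h0
  filter_upwards [hzero] with x hx
  have hre : (u x).re = 1 := by
    have : 1 - (u x).re = 0 := hx
    linarith
  have him : (u x).im = 0 := by
    have h1 : (u x).re ^ 2 + (u x).im ^ 2 = 1 := by
      have := Complex.sq_norm (u x)
      rw [hn x, Complex.normSq_apply] at this
      nlinarith [this]
    nlinarith [h1]
  exact Complex.ext (by simp [hre]) (by simp [him])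

lemma memℒp_conj {X : Type*} [MeasurableSpace X] {μ : Measure X}
    {f : X → ℂ} {p : ENNReal} (hf : MemLp f p μ) :
    MemLp (fun x => conj (f x)) p μ := by
  have := (Complex.conjCLE.toContinuousLinearMap : ℂ →L[ℝ] ℂ).comp_memLp' hf
  exact this

lemma integrable_mul_conj {X : Type*} [MeasurableSpace X] {μ : Measure X}
    {f g : X → ℂ} (hf : MemLp f 2 μ) (hg : MemLp g 2 μ) :
    Integrable (fun x => f x * conj (g x)) μ := by
  have h2 : (1 : ENNReal) / 1 = 1 / 2 + 1 / 2 := by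
    rw [ENNReal.div_add_div_same, one_div_one]
    norm_num
    rw [ENNReal.div_self (by norm_num) (by norm_num)]
  have := (memℒp_conj hg).smul hf (φ := f) (r := 1)
  rw [memLp_one_iff_integrable] at this
  exact this

lemma auxB {X : Type*} [MeasurableSpace X] {μ : Measure X} {f : X → ℂ} (hf : MemLp f 2 μ)
    (h : ∫ x, f x * conj (f x) ∂μ = 0) : f =ᵐ[μ] 0 := by
  have hpt : ∀ x, f x * conj (f x) = ((‖f x‖ ^ 2 : ℝ) : ℂ) := by
    intro x
    rw [Complex.mul_conj, Complex.sq_norm]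
  have h' : ∫ x, (‖f x‖ ^ 2 : ℝ) ∂μ = 0 := by
    have : ∫ x, ((‖f x‖ ^ 2 : ℝ) : ℂ) ∂μ = 0 := by
      rw [← h]; exact integral_congr_ae (Filter.Eventually.of_forall fun x => (hpt x).symm)
    rw [show (fun x => ((‖f x‖ ^ 2 : ℝ) : ℂ)) = fun x => ((RCLike.ofReal (‖f x‖ ^ 2) : ℂ)) from
      rfl] at this
    rwa [integral_ofReal, RCLike.ofReal_eq_zero] at this
  have hint : Integrable (fun x => ‖f x‖ ^ 2) μ := by
    simpa using hf.norm.integrable_sq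
  have hz : (fun x => ‖f x‖ ^ 2) =ᵐ[μ] 0 := by
    rw [← integral_eq_zero_iff_of_nonneg (fun x => by positivity) hint]
    exact h'
  filter_upwards [hz] with x hx
  have h1 : ‖f x‖ ^ 2 = 0 := hx
  have : ‖f x‖ = 0 := by nlinarith [norm_nonneg (f x)]
  simpa using this

lemma eigen_of_corr {X : Type*} [MeasurableSpace X] {μ : Measure X}
    (f : X → ℂ) (hf : MemLp f 2 μ) (S : X → X) (hS : MeasurePreserving S μ μ)
    (lam : ℂ) (hlam : lam * conj lam = 1) (C : ℝ)
    (hcorr : ∫ x, f (S x) * conj (f x) ∂μ = lam * C)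
    (hC : ∫ x, f x * conj (f x) ∂μ = (C : ℂ)) :
    (fun x => f (S x)) =ᵐ[μ] fun x => lam * f x := by
  have hfS : MemLp (fun x => f (S x)) 2 μ := hf.comp_measurePreserving hS
  have hlf : MemLp (fun x => lam * f x) 2 μ := hf.const_mul lam
  have hI1 : ∫ x, f (S x) * conj (f (S x)) ∂μ = (C : ℂ) := by
    have hasm : AEStronglyMeasurable (fun y => f y * conj (f y)) (μ.map S) := by
      rw [hS.map_eq]
      exact hf.aestronglyMeasurable.mul (memℒp_conj hf).aestronglyMeasurable
    have := integral_map hS.aemeasurable hasm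
    rw [hS.map_eq] at this
    rw [← this]
    exact hC
  have hI2 : ∫ x, f (S x) * conj (lam * f x) ∂μ = (C : ℂ) := by
    have : ∀ x, f (S x) * conj (lam * f x) = conj lam * (f (S x) * conj (f x)) := by
      intro x; rw [map_mul]; ring
    rw [integral_congr_ae (Filter.Eventually.of_forall this), integral_const_mul, hcorr]
    rw [← mul_assoc, mul_comm (conj lam) lam, hlam, one_mul]
  have hI3 : ∫ x, lam * f x * conj (f (S x)) ∂μ = (C : ℂ) := by
    have h1 : ∫ x, f x * conj (f (S x)) ∂μ = conj (lam * C) := by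
      rw [← hcorr, ← integral_conj]
      apply integral_congr_ae
      filter_upwards with x
      rw [map_mul, Complex.conj_conj, mul_comm]
    have : ∀ x, lam * f x * conj (f (S x)) = lam * (f x * conj (f (S x))) := by
      intro x; ring
    rw [integral_congr_ae (Filter.Eventually.of_forall this), integral_const_mul, h1, map_mul,
      Complex.conj_ofReal, ← mul_assoc, hlam, one_mul]
  have hI4 : ∫ x, lam * f x * conj (lam * f x) ∂μ = (C : ℂ) := by
    have : ∀ x, lam * f x * conj (lam * f x) = (lam * conj lam) * (f x * conj (f x)) := by
      intro x; rw [map_mul]; ring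
    rw [integral_congr_ae (Filter.Eventually.of_forall this), hlam,
      integral_congr_ae (Filter.Eventually.of_forall (fun x => one_mul _)), hC]
  set g : X → ℂ := fun x => f (S x) - lam * f x with hg
  have hgL2 : MemLp g 2 μ := hfS.sub hlf
  have hzero : ∫ x, g x * conj (g x) ∂μ = 0 := by
    have hpt : ∀ x, g x * conj (g x) =
        f (S x) * conj (f (S x)) - f (S x) * conj (lam * f x)
          - lam * f x * conj (f (S x)) + lam * f x * conj (lam * f x) := by
      intro x
      simp only [hg, map_sub]
      ring
    rw [integral_congr_ae (Filter.Eventually.of_forall hpt)]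
    have iA : Integrable (fun x => f (S x) * conj (f (S x))) μ := integrable_mul_conj hfS hfS
    have iB : Integrable (fun x => f (S x) * conj (lam * f x)) μ := integrable_mul_conj hfS hlf
    have iC : Integrable (fun x => lam * f x * conj (f (S x))) μ := integrable_mul_conj hlf hfS
    have iD : Integrable (fun x => lam * f x * conj (lam * f x)) μ := integrable_mul_conj hlf hlf
    have iAB : Integrable (fun x => f (S x) * conj (f (S x)) - f (S x) * conj (lam * f x)) μ :=
      iA.sub iB
    have iABC : Integrable (fun x => f (S x) * conj (f (S x)) - f (S x) * conj (lam * f x)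
        - lam * f x * conj (f (S x))) μ := iAB.sub iC
    rw [integral_add iABC iD, integral_sub iAB iC, integral_sub iA iB, hI1, hI2, hI3, hI4]
    ring
  have := auxB hgL2 hzero
  filter_upwards [this] with x hx
  have hx' : f (S x) - lam * f x = 0 := hx
  exact sub_eq_zero.mp hx'

/-- The inclusion of a subgroup `H ⊆ G` as a continuous monoid homomorphism. -/
def inclHom (G : Type*) [TopologicalSpace G] [AddCommGroup G] (H : AddSubgroup G) :
    ContinuousMonoidHom (Multiplicative ↥H) (Multiplicative G) where
  toFun h := Multiplicative.ofAdd (h.toAdd : G)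
  map_one' := rfl
  map_mul' _ _ := rfl
  continuous_toFun := continuous_subtype_val

theorem stmt_11
    (G : Type*) [TopologicalSpace G] [AddCommGroup G] [IsTopologicalAddGroup G]
    [LocallyCompactSpace G] [SecondCountableTopology G]
    (H : AddSubgroup G) (hH : IsClosed (H : Set G))
    (X : Type*) [MeasurableSpace X] (μ : Measure X) [IsProbabilityMeasure μ]
    (T : G → X → X)
    (hmp : ∀ g, MeasurePreserving (T g) μ μ)
    (hhom : ∀ g h x, T (g + h) x = T g (T h x))
    (hid : ∀ x, T 0 x = x)
    (σ0 : Measure (PontryaginDual (Multiplicative G))) [IsFiniteMeasure σ0]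
    (hex : ∀ f : X → ℂ, MemLp f 2 μ → (∫ x, f x ∂μ) = 0 →
      ∃ σf : Measure (PontryaginDual (Multiplicative G)),
        IsFiniteMeasure σf ∧ σf ≪ σ0 ∧
        ∀ g : G, (∫ x, f (T g x) * (starRingEnd ℂ) (f x) ∂μ) =
          ∫ γ, (starRingEnd ℂ) ((γ (Multiplicative.ofAdd g) : ℂ)) ∂σf)
    (hmax2 : ∀ ρ : Measure (PontryaginDual (Multiplicative G)),
      IsFiniteMeasure ρ → ρ ≪ σ0 →
      ∃ f : X → ℂ, MemLp f 2 μ ∧ (∫ x, f x ∂μ) = 0 ∧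
        ∀ g : G, (∫ x, f (T g x) * (starRingEnd ℂ) (f x) ∂μ) =
          ∫ γ, (starRingEnd ℂ) ((γ (Multiplicative.ofAdd g) : ℂ)) ∂ρ)
    (χ : PontryaginDual (Multiplicative ↥H)) :
    (∃ f : X → ℂ, MemLp f 2 μ ∧ (¬ ∃ c : ℂ, f =ᵐ[μ] fun _ => c) ∧
      ∀ h : ↥H, (fun x => f (T (h : G) x)) =ᵐ[μ]
        fun x => ((χ (Multiplicative.ofAdd h) : ℂ)) * f x) ↔
    0 < σ0 {γ | ContinuousMonoidHom.comp γ (inclHom G H) = χ} := by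
  classical
  set E : Set (PontryaginDual (Multiplicative G)) :=
      {γ | ContinuousMonoidHom.comp γ (inclHom G H) = χ} with hEdef
  have hcontcomp : Continuous fun γ : PontryaginDual (Multiplicative G) =>
      ContinuousMonoidHom.comp γ (inclHom G H) :=
    ContinuousMonoidHom.continuous_comp_left (inclHom G H)
  have hEclosed : IsClosed E := (isClosed_singleton (x := χ)).preimage hcontcomp
  have hEmeas : MeasurableSet E := hEclosed.measurableSet
  have hχunit : ∀ h : ↥H,
      ((χ (Multiplicative.ofAdd h) : ℂ)) * conj ((χ (Multiplicative.ofAdd h) : ℂ)) = 1 := by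
    intro h
    rw [Complex.mul_conj, Circle.normSq_coe]
    norm_num
  constructor
  · -- eigenfunction implies positive mass
    rintro ⟨f, hf2, hfnc, hfe⟩
    rw [pos_iff_ne_zero]
    intro hE0
    set c : ℂ := ∫ x, f x ∂μ with hc
    have hfint : Integrable f μ := hf2.integrable one_le_two
    have hchi : ∀ h : ↥H, ((χ (Multiplicative.ofAdd h) : ℂ) - 1) * c = 0 := by
      intro h
      have h1 : ∫ x, f (T (h : G) x) ∂μ = c := by
        have hasm : AEStronglyMeasurable f (μ.map (T (h : G))) := by
          rw [(hmp _).map_eq]; exact hf2.aestronglyMeasurable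
        have := integral_map (hmp ((h : G))).aemeasurable hasm
        rw [(hmp _).map_eq] at this
        exact this.symm
      have h2 : ∫ x, f (T (h : G) x) ∂μ = (χ (Multiplicative.ofAdd h) : ℂ) * c := by
        rw [integral_congr_ae (hfe h), integral_const_mul]
      rw [h1] at h2
      rw [sub_mul, one_mul, ← h2, sub_self]
    set g : X → ℂ := fun x => conj (f x - c) with hgdef
    have hg2 : MemLp g 2 μ := memℒp_conj (hf2.sub (memLp_const c))
    have hg0 : ∫ x, g x ∂μ = 0 := by
      have : ∫ x, (f x - c) ∂μ = 0 := by
        rw [integral_sub hfint (integrable_const c), integral_const]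
        simp [← hc]
      rw [hgdef]
      rw [integral_conj, this, map_zero]
    have hge : ∀ h : ↥H, (fun x => g (T (h : G) x)) =ᵐ[μ]
        fun x => conj ((χ (Multiplicative.ofAdd h) : ℂ)) * g x := by
      intro h
      filter_upwards [hfe h] with x hx
      show conj (f (T (h : G) x) - c) = conj ((χ (Multiplicative.ofAdd h) : ℂ)) * conj (f x - c)
      rw [hx, ← map_mul]
      congr 1
      linear_combination hchi h
    obtain ⟨σg, hfin, hac, hcorr⟩ := hex g hg2 hg0
    haveI := hfin
    have hbase : ∫ x, g x * conj (g x) ∂μ = ((σg Set.univ).toReal : ℂ) := by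
      have h0 := hcorr 0
      simp only [hid] at h0
      rw [h0]
      have hone : ∀ γ : PontryaginDual (Multiplicative G),
          conj ((γ (Multiplicative.ofAdd (0 : G)) : ℂ)) = 1 := by
        intro γ
        simp
      rw [integral_congr_ae (Filter.Eventually.of_forall hone), integral_const]
      simp [Complex.real_smul, measureReal_def]
    have hperd : ∀ d : ↥H, ∀ᵐ γ ∂σg,
        ((γ (Multiplicative.ofAdd ((d : G))) : ℂ)) = ((χ (Multiplicative.ofAdd d) : ℂ)) := by
      intro d
      have hcg : (fun x => g (T (d : G) x) * conj (g x)) =ᵐ[μ]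
          fun x => conj ((χ (Multiplicative.ofAdd d) : ℂ)) * (g x * conj (g x)) := by
        filter_upwards [hge d] with x hx
        rw [hx, mul_assoc]
      have hcd : ∫ x, g (T (d : G) x) * conj (g x) ∂μ
          = conj ((χ (Multiplicative.ofAdd d) : ℂ)) * ((σg Set.univ).toReal : ℂ) := by
        rw [integral_congr_ae hcg, integral_const_mul, hbase]
      have hval : ∫ γ, conj ((γ (Multiplicative.ofAdd ((d : G))) : ℂ)) ∂σg
          = conj ((χ (Multiplicative.ofAdd d) : ℂ)) * ((σg Set.univ).toReal : ℂ) := by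
        rw [← hcorr ((d : G)), hcd]
      have hu : ∀ᵐ γ ∂σg, ((χ (Multiplicative.ofAdd d) : ℂ))
          * conj ((γ (Multiplicative.ofAdd ((d : G))) : ℂ)) = 1 := by
        refine auxA σg _ ?_ ?_ ?_
        · exact (continuous_const.mul (Complex.continuous_conj.comp
            (continuous_evalPD (Multiplicative.ofAdd ((d : G)))))).aestronglyMeasurable
        · intro γ
          simp [map_mul, Circle.norm_coe]
        · rw [integral_const_mul, hval, ← mul_assoc, hχunit d, one_mul]
      filter_upwards [hu] with γ hγ
      have hns : conj ((γ (Multiplicative.ofAdd ((d : G))) : ℂ))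
          * ((γ (Multiplicative.ofAdd ((d : G))) : ℂ)) = 1 := by
        rw [mul_comm, Complex.mul_conj, Circle.normSq_coe]
        norm_num
      linear_combination ((χ (Multiplicative.ofAdd d) : ℂ)) * hns
        - ((γ (Multiplicative.ofAdd ((d : G))) : ℂ)) * hγ
    haveI : SecondCountableTopology ↥H :=
      TopologicalSpace.secondCountableTopology_induced ↥H G ((↑) : ↥H → G)
    haveI : TopologicalSpace.SeparableSpace ↥H :=
      TopologicalSpace.SecondCountableTopology.to_separableSpace
    obtain ⟨D, hDc, hDdense⟩ := TopologicalSpace.exists_countable_dense ↥H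
    have hball : ∀ᵐ γ ∂σg, ∀ d ∈ D,
        ((γ (Multiplicative.ofAdd ((d : G))) : ℂ)) = ((χ (Multiplicative.ofAdd d) : ℂ)) :=
      (MeasureTheory.ae_ball_iff hDc).2 fun d _ => hperd d
    have hmem : ∀ᵐ γ ∂σg, γ ∈ E := by
      filter_upwards [hball] with γ hγ
      have cont1 : Continuous fun h : ↥H => ((γ (Multiplicative.ofAdd ((h : G))) : ℂ)) :=
        continuous_subtype_val.comp
          ((map_continuous γ).comp (continuous_ofAdd.comp continuous_subtype_val))
      have cont2 : Continuous fun h : ↥H => ((χ (Multiplicative.ofAdd h) : ℂ)) :=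
        continuous_subtype_val.comp ((map_continuous χ).comp continuous_ofAdd)
      have heq := Continuous.ext_on hDdense cont1 cont2 hγ
      show ContinuousMonoidHom.comp γ (inclHom G H) = χ
      ext h
      exact congrFun heq h.toAdd
    have hEc : σg Eᶜ = 0 := by
      have := MeasureTheory.ae_iff.mp hmem
      exact this
    have hgE : σg E = 0 := hac hE0
    have huniv : σg Set.univ = 0 := by
      have hle := measure_union_le (μ := σg) E Eᶜ
      rw [Set.union_compl_self, hgE, hEc] at hle
      simpa using hle
    have hzero : ∫ x, g x * conj (g x) ∂μ = 0 := by
      rw [hbase, huniv]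
      simp
    have hg00 : g =ᵐ[μ] 0 := auxB hg2 hzero
    apply hfnc
    refine ⟨c, ?_⟩
    filter_upwards [hg00] with x hx
    have h1 : conj (f x - c) = 0 := hx
    have h2 : f x - c = 0 := by
      have := congrArg conj h1
      rwa [Complex.conj_conj, map_zero] at this
    exact sub_eq_zero.mp h2
  · -- positive mass implies eigenfunction
    intro hpos
    haveI hfinR : IsFiniteMeasure (σ0.restrict E) :=
      ⟨by rw [Measure.restrict_apply_univ]; exact measure_lt_top σ0 E⟩
    obtain ⟨f, hf2, hf0, hcorr⟩ := hmax2 (σ0.restrict E) hfinR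
      (Measure.absolutelyContinuous_of_le Measure.restrict_le_self)
    set C : ℝ := (σ0 E).toReal with hC
    have hCpos : 0 < C := ENNReal.toReal_pos hpos.ne' (measure_ne_top σ0 E)
    have hval : ∀ h : ↥H, ∫ γ, conj ((γ (Multiplicative.ofAdd ((h : G))) : ℂ)) ∂(σ0.restrict E)
        = conj ((χ (Multiplicative.ofAdd h) : ℂ)) * (C : ℂ) := by
      intro h
      have heqOn : Set.EqOn
          (fun γ : PontryaginDual (Multiplicative G) =>
            conj ((γ (Multiplicative.ofAdd ((h : G))) : ℂ)))
          (fun _ => conj ((χ (Multiplicative.ofAdd h) : ℂ))) E := by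
        intro γ hγ
        have : γ (Multiplicative.ofAdd ((h : G))) = χ (Multiplicative.ofAdd h) :=
          DFunLike.congr_fun hγ (Multiplicative.ofAdd h)
        simp only [this]
      rw [setIntegral_congr_fun hEmeas heqOn, setIntegral_const, Complex.real_smul, mul_comm, measureReal_def]
    have hbase0 : ∫ x, f x * conj (f x) ∂μ = (C : ℂ) := by
      have h0 := hcorr 0
      simp only [hid] at h0
      rw [h0]
      have heqOn : Set.EqOn
          (fun γ : PontryaginDual (Multiplicative G) =>
            conj ((γ (Multiplicative.ofAdd ((0 : G))) : ℂ)))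
          (fun _ => (1 : ℂ)) E := by
        intro γ _
        simp
      rw [setIntegral_congr_fun hEmeas heqOn, setIntegral_const]
      simp [Complex.real_smul, measureReal_def, hC]
    have heig : ∀ h : ↥H, (fun x => f (T (h : G) x)) =ᵐ[μ]
        fun x => conj ((χ (Multiplicative.ofAdd h) : ℂ)) * f x := by
      intro h
      refine eigen_of_corr f hf2 (T (h : G)) (hmp _) _ ?_ C ?_ hbase0
      · rw [Complex.conj_conj, mul_comm]
        exact hχunit h
      · rw [hcorr ((h : G)), hval h]
    refine ⟨fun x => conj (f x), memℒp_conj hf2, ?_, ?_⟩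
    · rintro ⟨k, hk⟩
      have hfc : f =ᵐ[μ] fun _ => conj k := by
        filter_upwards [hk] with x hx
        have := congrArg conj hx
        rwa [Complex.conj_conj] at this
      have h1 : ∫ x, f x ∂μ = conj k := by
        rw [integral_congr_ae hfc, integral_const]
        simp
      have hk0 : (conj k : ℂ) = 0 := by rw [← h1, hf0]
      have hf00 : f =ᵐ[μ] 0 := by
        filter_upwards [hfc] with x hx
        rw [hx, hk0]
        rfl
      have hcontr : (C : ℂ) = 0 := by
        rw [← hbase0]
        have : (fun x => f x * conj (f x)) =ᵐ[μ] 0 := by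
          filter_upwards [hf00] with x hx
          have : f x = 0 := hx
          simp [this]
        rw [integral_congr_ae this]
        simp
      exact hCpos.ne' (Complex.ofReal_eq_zero.mp hcontr)
    · intro h
      filter_upwards [heig h] with x hx
      show conj (f (T (h : G) x)) = ((χ (Multiplicative.ofAdd h) : ℂ)) * conj (f x)
      have : f (T (h : G) x) = conj ((χ (Multiplicative.ofAdd h) : ℂ)) * f x := hx
      rw [this, map_mul, Complex.conj_conj]
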